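/- Let p ≥ 2 and K ≥ 1 be real parameters, let G be a finite abelian group, and let A be a nonempty subset of G with |A + A| ≤ K|A|. Then μ_G(A + A)^{1/p} ≤ K^{1/2} · ‖1_A ∗ μ_A‖_{L^{p/2}}^{1/2}, and ‖1_A ∗ μ_A‖_{L^{p/2}}^{1/2} ≤ K^{1/2} · ‖1_A ∗ μ_A‖_{L^p}. -/

import Mathlib

open Pointwise

universe u

/-- The average `E_G f = |G|⁻¹ Σ_x f x`. -/
noncomputable def gavg {G : Type u} [AddCommGroup G] [Fintype G] (f : G → ℝ) : ℝ :=
  (Fintype.card G : ℝ)⁻¹ * ∑ x, f x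

/-- Normalized convolution `(f ∗ g)(x) = E_y f(y) g(x − y)`. -/
noncomputable def conv {G : Type u} [AddCommGroup G] [Fintype G] (f g : G → ℝ) : G → ℝ :=
  fun x => (Fintype.card G : ℝ)⁻¹ * ∑ y, f y * g (x - y)

/-- The indicator function `1_A`. -/
noncomputable def ind {G : Type u} [AddCommGroup G] (A : Set G) : G → ℝ :=
  A.indicator fun _ => (1 : ℝ)

/-- The normalized measure `μ_A = (|G|/|A|)·1_A` of a subset `A ⊆ G`. -/
noncomputable def muFn {G : Type u} [AddCommGroup G] [Fintype G] (A : Set G) : G → ℝ :=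
  A.indicator fun _ => (Fintype.card G : ℝ) / (Nat.card A : ℝ)

/-- The `L^p` norm `‖f‖_{L^p} = (E_G |f|^p)^{1/p}`. -/
noncomputable def LpNorm {G : Type u} [AddCommGroup G] [Fintype G] (f : G → ℝ) (p : ℝ) : ℝ :=
  (gavg fun x => |f x| ^ p) ^ (1 / p)

/-- Pure real-arithmetic part. -/
lemma aux16 {n a s K T Tp p : ℝ} (hn : 0 < n) (ha : 0 < a) (hs : 0 < s)
    (hK : 1 ≤ K) (hp : 2 ≤ p) (hT0 : 0 ≤ T) (hTp0 : 0 ≤ Tp)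
    (hAA : s ≤ K * a) (jensen : (a / s) ^ (p / 2) ≤ T / s) (CS : T ^ 2 ≤ Tp * s) :
    (s / n) ^ (1 / p) ≤ Real.sqrt K * Real.sqrt ((n⁻¹ * T) ^ (1 / (p / 2))) ∧
      Real.sqrt ((n⁻¹ * T) ^ (1 / (p / 2))) ≤ Real.sqrt K * (n⁻¹ * Tp) ^ (1 / p) := by
  set q : ℝ := p / 2 with hqdef
  have hp0 : (0 : ℝ) < p := by linarith
  have hq1 : (1 : ℝ) ≤ q := by rw [hqdef]; linarith
  have hq0 : (0 : ℝ) < q := by linarith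
  have hq_ne : q ≠ 0 := hq0.ne'
  have hp_ne : p ≠ 0 := hp0.ne'
  have hK0 : (0 : ℝ) < K := by linarith
  have hKq : (0 : ℝ) < K ^ q := Real.rpow_pos_of_pos hK0 q
  set m : ℝ := n⁻¹ * T with hm
  set M : ℝ := n⁻¹ * Tp with hM
  have hm0 : 0 ≤ m := by positivity
  have hM0 : 0 ≤ M := by positivity
  -- key1 : s / n ≤ K ^ q * m
  have hKinv : (K ^ q)⁻¹ ≤ T / s := by
    refine le_trans ?_ jensen
    have h1 : 1 / K ≤ a / s := by
      rw [div_le_div_iff₀ hK0 hs]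
      nlinarith
    calc (K ^ q)⁻¹ = (1 / K) ^ q := by
          rw [one_div, Real.inv_rpow hK0.le]
      _ ≤ (a / s) ^ q := Real.rpow_le_rpow (by positivity) h1 hq0.le
  have key1 : s / n ≤ K ^ q * m := by
    have h2 : s * (K ^ q)⁻¹ ≤ T := by
      have := mul_le_mul_of_nonneg_left hKinv hs.le
      rwa [mul_div_cancel₀ _ hs.ne'] at this
    have key1s : s ≤ K ^ q * T := by
      calc s = K ^ q * (s * (K ^ q)⁻¹) := by field_simp
        _ ≤ K ^ q * T := mul_le_mul_of_nonneg_left h2 hKq.le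
    rw [hm, div_le_iff₀ hn,
      show K ^ q * (n⁻¹ * T) * n = K ^ q * T * (n⁻¹ * n) from by ring,
      inv_mul_cancel₀ hn.ne', mul_one]
    exact key1s
  -- goal 1
  have hsn : (0 : ℝ) ≤ s / n := by positivity
  have step1 : (s / n) ^ (1 / q) ≤ K * m ^ (1 / q) := by
    calc (s / n) ^ (1 / q) ≤ (K ^ q * m) ^ (1 / q) :=
          Real.rpow_le_rpow hsn key1 (by positivity)
      _ = (K ^ q) ^ (1 / q) * m ^ (1 / q) := Real.mul_rpow hKq.le hm0
      _ = K * m ^ (1 / q) := by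
          rw [← Real.rpow_mul hK0.le, mul_one_div, div_self hq_ne, Real.rpow_one]
  have goal1 : (s / n) ^ (1 / p) ≤ Real.sqrt K * Real.sqrt (m ^ (1 / q)) := by
    have h1p : (1 : ℝ) / p = 1 / q * (1 / 2) := by
      rw [hqdef]; field_simp
    calc (s / n) ^ (1 / p) = ((s / n) ^ (1 / q)) ^ ((1 : ℝ) / 2) := by
          rw [h1p, Real.rpow_mul hsn]
      _ ≤ (K * m ^ (1 / q)) ^ ((1 : ℝ) / 2) :=
          Real.rpow_le_rpow (by positivity) step1 (by norm_num)
      _ = Real.sqrt K * Real.sqrt (m ^ (1 / q)) := by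
          rw [Real.mul_rpow hK0.le (Real.rpow_nonneg hm0 _), ← Real.sqrt_eq_rpow,
            ← Real.sqrt_eq_rpow]
  -- goal 2
  have hm2 : m ^ 2 ≤ M * (s / n) := by
    calc m ^ 2 = T ^ 2 * (n⁻¹ * n⁻¹) := by rw [hm]; ring
      _ ≤ Tp * s * (n⁻¹ * n⁻¹) := by
          have hn' : (0:ℝ) ≤ n⁻¹ * n⁻¹ := by positivity
          exact mul_le_mul_of_nonneg_right CS hn'
      _ = M * (s / n) := by rw [hM, div_eq_mul_inv]; ring
  have key2 : m ≤ K ^ q * M := by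
    rcases eq_or_lt_of_le hm0 with h | h
    · rw [← h]; positivity
    · have h2 : m * m ≤ K ^ q * M * m := by
        calc m * m = m ^ 2 := (sq m).symm
          _ ≤ M * (s / n) := hm2
          _ ≤ M * (K ^ q * m) := mul_le_mul_of_nonneg_left key1 hM0
          _ = K ^ q * M * m := by ring
      exact le_of_mul_le_mul_right h2 h
  have goal2 : Real.sqrt (m ^ (1 / q)) ≤ Real.sqrt K * M ^ (1 / p) := by
    have step : m ^ (1 / q) ≤ K * (M ^ (1 / p)) ^ 2 := by
      calc m ^ (1 / q) ≤ (K ^ q * M) ^ (1 / q) :=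
            Real.rpow_le_rpow hm0 key2 (by positivity)
        _ = K * M ^ (1 / q) := by
            rw [Real.mul_rpow hKq.le hM0, ← Real.rpow_mul hK0.le, mul_one_div, div_self hq_ne,
              Real.rpow_one]
        _ = K * (M ^ (1 / p)) ^ 2 := by
            congr 1
            rw [← Real.rpow_natCast (M ^ (1 / p)) 2, ← Real.rpow_mul hM0]
            congr 1
            rw [hqdef]
            field_simp
            norm_num
    calc Real.sqrt (m ^ (1 / q)) ≤ Real.sqrt (K * (M ^ (1 / p)) ^ 2) := Real.sqrt_le_sqrt step
      _ = Real.sqrt K * M ^ (1 / p) := by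
          rw [Real.sqrt_mul hK0.le, Real.sqrt_sq (Real.rpow_nonneg hM0 _)]
  exact ⟨goal1, goal2⟩

theorem statement16 {G : Type u} [AddCommGroup G] [Fintype G] [DecidableEq G]
    (p K : ℝ) (hp : 2 ≤ p) (hK : 1 ≤ K) (A : Finset G) (hA : A.Nonempty)
    (hAA : ((A + A).card : ℝ) ≤ K * (A.card : ℝ)) :
    (((A + A).card : ℝ) / (Fintype.card G : ℝ)) ^ (1 / p)
        ≤ Real.sqrt K * Real.sqrt (LpNorm (conv (ind (A : Set G)) (muFn (A : Set G))) (p / 2)) ∧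
      Real.sqrt (LpNorm (conv (ind (A : Set G)) (muFn (A : Set G))) (p / 2))
        ≤ Real.sqrt K * LpNorm (conv (ind (A : Set G)) (muFn (A : Set G))) p := by
  classical
  obtain ⟨a0, ha0⟩ := hA
  have : Nonempty G := ⟨a0⟩
  set f : G → ℝ := conv (ind (A : Set G)) (muFn (A : Set G)) with hfdef
  have hn : (0 : ℝ) < (Fintype.card G : ℝ) := by exact_mod_cast Fintype.card_pos
  have ha : (0 : ℝ) < (A.card : ℝ) := by exact_mod_cast Finset.card_pos.2 ⟨a0, ha0⟩
  have hSne : (A + A).Nonempty := ⟨a0 + a0, Finset.add_mem_add ha0 ha0⟩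
  have hs : (0 : ℝ) < ((A + A).card : ℝ) := by exact_mod_cast Finset.card_pos.2 hSne
  have hp0 : (0 : ℝ) < p := by linarith
  have hq0 : (0 : ℝ) < p / 2 := by linarith
  have hacard : ((Nat.card (A : Set G)) : ℝ) = (A.card : ℝ) := by
    rw [Nat.card_coe_set_eq, Set.ncard_coe_finset]
  have hmu : ∀ z : G, muFn (A : Set G) z
      = if z ∈ A then (Fintype.card G : ℝ) / (A.card : ℝ) else 0 := by
    intro z; simp [muFn, Set.indicator_apply, hacard]
  have hind : ∀ z : G, ind (A : Set G) z = if z ∈ A then 1 else 0 := by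
    intro z; simp [ind, Set.indicator_apply]
  have hf0 : ∀ x, 0 ≤ f x := by
    intro x
    refine mul_nonneg (by positivity) (Finset.sum_nonneg fun y _ => ?_)
    rw [hind, hmu]
    split_ifs <;> positivity
  have hfS : ∀ x, x ∉ A + A → f x = 0 := by
    intro x hx
    rw [hfdef]
    show (Fintype.card G : ℝ)⁻¹ * ∑ y, _ = 0
    rw [mul_eq_zero]; right
    refine Finset.sum_eq_zero fun y _ => ?_
    rw [hind, hmu]
    split_ifs with h1 h2
    · exfalso
      have h3 := Finset.add_mem_add h1 h2
      rw [show y + (x - y) = x from by abel] at h3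
      exact hx h3
    all_goals ring
  have hmusum : ∑ z, muFn (A : Set G) z = (Fintype.card G : ℝ) := by
    simp_rw [hmu]
    rw [Finset.sum_ite_mem, Finset.univ_inter, Finset.sum_const, nsmul_eq_mul]
    field_simp
  have hindsum : ∑ y, ind (A : Set G) y = (A.card : ℝ) := by
    simp_rw [hind]
    rw [Finset.sum_ite_mem, Finset.univ_inter, Finset.sum_const, nsmul_eq_mul, mul_one]
  have hsum : ∑ x, f x = (A.card : ℝ) := by
    have h1 : ∑ x, f x = (Fintype.card G : ℝ)⁻¹
        * ∑ y, ind (A : Set G) y * ∑ x, muFn (A : Set G) (x - y) := by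
      simp only [hfdef, conv]
      rw [← Finset.mul_sum, Finset.sum_comm]
      congr 1
      exact Finset.sum_congr rfl fun y _ => (Finset.mul_sum _ _ _).symm
    have h2 : ∀ y : G, ∑ x, muFn (A : Set G) (x - y) = (Fintype.card G : ℝ) := by
      intro y
      rw [← hmusum]
      exact Fintype.sum_equiv (Equiv.subRight y) _ _ fun x => rfl
    simp_rw [h1, h2, ← Finset.sum_mul, hindsum]
    field_simp
  -- sums over the sumset
  have hfsumS : ∑ x ∈ A + A, f x = (A.card : ℝ) := by
    rw [← hsum]
    exact Finset.sum_subset (Finset.subset_univ _) fun x _ hx => hfS x hx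
  have hTS : ∑ x ∈ A + A, f x ^ (p / 2) = ∑ x, f x ^ (p / 2) := by
    refine Finset.sum_subset (Finset.subset_univ _) fun x _ hx => ?_
    rw [hfS x hx, Real.zero_rpow hq0.ne']
  have hTpS : ∑ x ∈ A + A, f x ^ p = ∑ x, f x ^ p := by
    refine Finset.sum_subset (Finset.subset_univ _) fun x _ hx => ?_
    rw [hfS x hx, Real.zero_rpow hp0.ne']
  have hT0 : 0 ≤ ∑ x, f x ^ (p / 2) :=
    Finset.sum_nonneg fun x _ => Real.rpow_nonneg (hf0 x) _
  have hTp0 : 0 ≤ ∑ x, f x ^ p :=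
    Finset.sum_nonneg fun x _ => Real.rpow_nonneg (hf0 x) _
  -- Jensen
  have jensen : ((A.card : ℝ) / ((A + A).card : ℝ)) ^ (p / 2)
      ≤ (∑ x, f x ^ (p / 2)) / ((A + A).card : ℝ) := by
    have hw : ∀ x ∈ A + A, (0 : ℝ) ≤ 1 / ((A + A).card : ℝ) := fun x _ => by positivity
    have hw' : ∑ _x ∈ A + A, (1 / ((A + A).card : ℝ)) = 1 := by
      rw [Finset.sum_const, nsmul_eq_mul]
      field_simp
    have h := Real.rpow_arith_mean_le_arith_mean_rpow (A + A)
      (fun _ => 1 / ((A + A).card : ℝ)) f hw hw' (fun x _ => hf0 x) (by linarith : 1 ≤ p / 2)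
    rw [← Finset.mul_sum, ← Finset.mul_sum, hfsumS, hTS, one_div, inv_mul_eq_div,
      inv_mul_eq_div] at h
    exact h
  -- Cauchy--Schwarz
  have CS : (∑ x, f x ^ (p / 2)) ^ 2 ≤ (∑ x, f x ^ p) * ((A + A).card : ℝ) := by
    have h := Finset.sum_mul_sq_le_sq_mul_sq (A + A) (fun x => f x ^ (p / 2)) fun _ => (1 : ℝ)
    have hsq : ∀ x : G, (f x ^ (p / 2)) ^ 2 = f x ^ p := by
      intro x
      rw [← Real.rpow_natCast (f x ^ (p / 2)) 2, ← Real.rpow_mul (hf0 x)]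
      norm_num
    simp only [mul_one, one_pow, hsq, Finset.sum_const, nsmul_eq_mul, hTS, hTpS] at h
    exact h
  have := aux16 (n := (Fintype.card G : ℝ)) hn ha hs hK hp hT0 hTp0 hAA jensen CS
  -- rewrite LpNorm
  have habs : ∀ x, |f x| = f x := fun x => abs_of_nonneg (hf0 x)
  have hLq : LpNorm f (p / 2)
      = ((Fintype.card G : ℝ)⁻¹ * ∑ x, f x ^ (p / 2)) ^ (1 / (p / 2)) := by
    simp only [LpNorm, gavg, habs]
  have hLp : LpNorm f p = ((Fintype.card G : ℝ)⁻¹ * ∑ x, f x ^ p) ^ (1 / p) := by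
    simp only [LpNorm, gavg, habs]
  rw [hLq, hLp]
  exact this
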